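/- Permitted-extension lemma: let s be an ordinal and (y_t)_{t<s} a family of elements of 2^ℕ. For a finite binary string σ and an ordinal r ≤ s, say σ is forbidden at r if the set F_σ ∩ r = {t < r : σ is an initial segment of y_t} is not a closed subset of the ordinal r (i.e., there is a limit ordinal u < r such that F_σ ∩ u is cofinal in u but u ∉ F_σ); otherwise σ is permitted at r. Assume that for every t < s, every initial segment of y_t is permitted at t. Then: (i) the empty string is permitted at s; and (ii) every string σ permitted at s has at least one immediate extension σ⌢i (i ∈ {0,1}) permitted at s. -/

import Mathlib

/-- `σ` is an initial segment of the infinite binary sequence `X`. -/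
def IsPrefixOf (σ : List Bool) (X : ℕ → Bool) : Prop :=
  ∀ i, (h : i < σ.length) → X i = σ.get ⟨i, h⟩

/-- `σ` is forbidden at the ordinal `r` (with respect to the family `y`): the set
`F_σ ∩ r = {t < r : σ ⪯ y_t}` is not closed in `r`, i.e. there is a limit ordinal
`u < r` such that `F_σ ∩ u` is cofinal in `u` but `u ∉ F_σ`. -/
def Forbidden (y : Ordinal → (ℕ → Bool)) (σ : List Bool) (r : Ordinal) : Prop :=
  ∃ u, u < r ∧ Order.IsSuccLimit u ∧
    (∀ v < u, ∃ t, v ≤ t ∧ t < u ∧ IsPrefixOf σ (y t)) ∧ ¬ IsPrefixOf σ (y u)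

lemma isPrefixOf_of_append {σ : List Bool} {b : Bool} {X : ℕ → Bool}
    (h : IsPrefixOf (σ ++ [b]) X) : IsPrefixOf σ X := by
  intro i hi
  have hi' : i < (σ ++ [b]).length := by simp; omega
  have := h i hi'
  rw [this]
  simp [List.getElem_append, hi]

lemma isPrefixOf_append_self {σ : List Bool} {X : ℕ → Bool}
    (h : IsPrefixOf σ X) : IsPrefixOf (σ ++ [X σ.length]) X := by
  intro i hi
  simp at hi
  rcases Nat.lt_or_ge i σ.length with hlt | hge
  · rw [h i hlt]
    simp [List.getElem_append, hlt]
  · have : i = σ.length := by omega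
    subst this
    simp [List.getElem_append]

lemma not_isPrefixOf {σ : List Bool} {X : ℕ → Bool}
    (h : ∀ b, ¬ IsPrefixOf (σ ++ [b]) X) : ¬ IsPrefixOf σ X :=
  fun hp => h (X σ.length) (isPrefixOf_append_self hp)

/-- Permitted-extension lemma: if every initial segment of every `y_t` (`t < s`) is
permitted at `t`, then the empty string is permitted at `s`, and every string
permitted at `s` has a permitted immediate extension. -/
theorem stmt_15 (s : Ordinal) (y : Ordinal → (ℕ → Bool))
    (hperm : ∀ t < s, ∀ σ : List Bool, IsPrefixOf σ (y t) → ¬ Forbidden y σ t) :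
    ¬ Forbidden y [] s ∧
      ∀ σ : List Bool, ¬ Forbidden y σ s → ∃ i : Bool, ¬ Forbidden y (σ ++ [i]) s := by
  constructor
  · rintro ⟨u, -, -, -, hnp⟩
    exact hnp (fun i h => absurd h (Nat.not_lt_zero i))
  · intro σ hσ
    by_contra h
    push_neg at h
    obtain ⟨u0, hu0s, hu0lim, hcof0, hnp0⟩ := h false
    obtain ⟨u1, hu1s, hu1lim, hcof1, hnp1⟩ := h true
    -- key: a witness for σ
    have key : ∀ u, u < s → Order.IsSuccLimit u →
        (∃ b : Bool, ∀ v < u, ∃ t, v ≤ t ∧ t < u ∧ IsPrefixOf (σ ++ [b]) (y t)) →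
        (∀ b, ¬ IsPrefixOf (σ ++ [b]) (y u)) → False := by
      rintro u hus hlim ⟨b, hcof⟩ hnp
      refine hσ ⟨u, hus, hlim, ?_, not_isPrefixOf hnp⟩
      intro v hv
      obtain ⟨t, hvt, htu, hp⟩ := hcof v hv
      exact ⟨t, hvt, htu, isPrefixOf_of_append hp⟩
    rcases lt_trichotomy u0 u1 with hlt | heq | hlt
    · refine key u1 hu1s hu1lim ⟨true, hcof1⟩ ?_
      intro b
      cases b
      · exact fun hp => hperm u1 hu1s _ hp ⟨u0, hlt, hu0lim, hcof0, hnp0⟩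
      · exact hnp1
    · subst heq
      refine key u0 hu0s hu0lim ⟨false, hcof0⟩ ?_
      intro b; cases b
      · exact hnp0
      · exact hnp1
    · refine key u0 hu0s hu0lim ⟨false, hcof0⟩ ?_
      intro b
      cases b
      · exact hnp0
      · exact fun hp => hperm u0 hu0s _ hp ⟨u1, hlt, hu1lim, hcof1, hnp1⟩
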